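/- Let (P,<) be a finite poset and let (B,U) be a partition of P with x in U, y in B, and x < y. Define V = (B \ {y}) ∪ {x} and W = (U \ {x}) ∪ {y}. Then e(V,W) ≥ 1 + e(B,U). -/

import Mathlib

open Finset
open scoped Classical

/-- `e X Y` counts pairs `(x,y)` with `x ∈ X`, `y ∈ Y`, `x < y`. -/
noncomputable def e {P : Type*} [Fintype P] [PartialOrder P] (X Y : Finset P) : ℕ :=
  ((X ×ˢ Y).filter fun p => p.1 < p.2).card

/-- Swapping a reversed pair increases the cut size by at least one. -/
theorem swap_increases (P : Type*) [Fintype P] [PartialOrder P]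
    (B U : Finset P) (hdisj : Disjoint B U) (hcover : B ∪ U = Finset.univ)
    (x y : P) (hx : x ∈ U) (hy : y ∈ B) (hxy : x < y) :
    1 + e B U ≤ e (insert x (B.erase y)) (insert y (U.erase x)) := by
  classical
  have hxB : x ∉ B := fun h => disjoint_left.mp hdisj h hx
  have hyU : y ∉ U := fun h => disjoint_left.mp hdisj hy h
  set V := insert x (B.erase y) with hV
  set W := insert y (U.erase x) with hW
  set S := (B ×ˢ U).filter (fun p => p.1 < p.2) with hS
  set T := (V ×ˢ W).filter (fun p => p.1 < p.2) with hT
  have hxyT : (x, y) ∈ T := by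
    refine mem_filter.mpr ⟨mem_product.mpr ⟨?_, ?_⟩, hxy⟩
    · exact mem_insert_self _ _
    · exact mem_insert_self _ _
  have hcard : S.card ≤ (T.erase (x, y)).card := by
    apply Finset.card_le_card_of_injOn
      (fun p => (if p.1 = y then x else p.1, if p.2 = x then y else p.2))
    · intro p hp
      simp only [hS, mem_coe, mem_filter, mem_product] at hp
      obtain ⟨⟨h1, h2⟩, h3⟩ := hp
      have hp1x : p.1 ≠ x := fun h => hxB (h ▸ h1)
      have hp2y : p.2 ≠ y := fun h => hyU (h ▸ h2)
      show (if p.1 = y then x else p.1, if p.2 = x then y else p.2) ∈ T.erase (x, y)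
      refine mem_erase.mpr ⟨?_, mem_filter.mpr ⟨mem_product.mpr ⟨?_, ?_⟩, ?_⟩⟩
      · intro h
        rw [Prod.mk.injEq] at h
        obtain ⟨ha, hb⟩ := h
        have hp1 : p.1 = y := by
          by_contra hne; rw [if_neg hne] at ha; exact hp1x ha
        have hp2 : p.2 = x := by
          by_contra hne; rw [if_neg hne] at hb; exact hp2y hb
        rw [hp1, hp2] at h3
        exact absurd h3 (lt_asymm hxy)
      · by_cases hc : p.1 = y
        · rw [if_pos hc]; exact mem_insert_self _ _
        · rw [if_neg hc]; exact mem_insert_of_mem (mem_erase.mpr ⟨hc, h1⟩)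
      · by_cases hc : p.2 = x
        · rw [if_pos hc]; exact mem_insert_self _ _
        · rw [if_neg hc]; exact mem_insert_of_mem (mem_erase.mpr ⟨hc, h2⟩)
      · by_cases hc : p.1 = y
        · by_cases hd : p.2 = x
          · rw [hc, hd] at h3; exact absurd h3 (lt_asymm hxy)
          · rw [if_pos hc, if_neg hd]; rw [hc] at h3; exact lt_trans hxy h3
        · by_cases hd : p.2 = x
          · rw [if_neg hc, if_pos hd]; rw [hd] at h3; exact lt_trans h3 hxy
          · rw [if_neg hc, if_neg hd]; exact h3
    · intro p hp q hq hpq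
      simp only [hS, mem_coe, mem_filter, mem_product] at hp hq
      obtain ⟨⟨hp1, hp2⟩, _⟩ := hp
      obtain ⟨⟨hq1, hq2⟩, _⟩ := hq
      have hp1x : p.1 ≠ x := fun h => hxB (h ▸ hp1)
      have hq1x : q.1 ≠ x := fun h => hxB (h ▸ hq1)
      have hp2y : p.2 ≠ y := fun h => hyU (h ▸ hp2)
      have hq2y : q.2 ≠ y := fun h => hyU (h ▸ hq2)
      rw [Prod.mk.injEq] at hpq
      obtain ⟨ha, hb⟩ := hpq
      have h1 : p.1 = q.1 := by
        by_cases hc : p.1 = y <;> by_cases hd : q.1 = y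
        · rw [hc, hd]
        · rw [if_pos hc, if_neg hd] at ha; exact absurd ha.symm hq1x
        · rw [if_neg hc, if_pos hd] at ha; exact absurd ha hp1x
        · rw [if_neg hc, if_neg hd] at ha; exact ha
      have h2 : p.2 = q.2 := by
        by_cases hc : p.2 = x <;> by_cases hd : q.2 = x
        · rw [hc, hd]
        · rw [if_pos hc, if_neg hd] at hb; exact absurd hb.symm hq2y
        · rw [if_neg hc, if_pos hd] at hb; exact absurd hb hp2y
        · rw [if_neg hc, if_neg hd] at hb; exact hb
      exact Prod.ext h1 h2
  have hTcard : (T.erase (x, y)).card = T.card - 1 := card_erase_of_mem hxyT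
  have hTpos : 1 ≤ T.card := card_pos.mpr ⟨_, hxyT⟩
  have eS : e B U = S.card := rfl
  have eT : e V W = T.card := rfl
  rw [eS, eT]
  omega
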